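/- arXiv:1510.00043 — 2 statements merged into one kernel-verified Lean document; each statement's English description precedes it below -/
import Mathlib

section
/- There exists a unique real number κ > 0 with ψ₁₂(κi) = 0. This κ satisfies the equation (κi)² + (ν(2−σ)/μ)·(κi)^σ + (2−σ)/σ = 0, and 2.2142 < κ < 2.2143. -/
open Complex

/-- `σ = (2/π)·arctan((3+√5)/2)`. -/
noncomputable def sigma : ℝ := 2 / Real.pi * Real.arctan ((3 + Real.sqrt 5) / 2)

/-- `ν = 1 - 2√5/3`. -/
noncomputable def nu : ℝ := 1 - 2 * Real.sqrt 5 / 3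

/-- `μ = (σ(σ-2)/3)·√(2/(1-cos(σπ)))·e^{iσπ/2}`. -/
noncomputable def mu : ℂ :=
  ((sigma * (sigma - 2) / 3 : ℝ) : ℂ) *
    ((Real.sqrt (2 / (1 - Real.cos (sigma * Real.pi))) : ℝ) : ℂ) *
    Complex.exp (((sigma * Real.pi / 2 : ℝ) : ℂ) * I)

/-- `ψ₁₂(z) = (μ/z^σ)·(z²/(2-σ) + 1/σ) + ν`, with the principal power `z^σ`. -/
noncomputable def psi12 (z : ℂ) : ℂ :=
  mu / z ^ (sigma : ℂ) * (z ^ 2 / (2 - (sigma : ℂ)) + 1 / (sigma : ℂ)) + (nu : ℂ)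

/- ### Auxiliary real quantities -/

/-- The real square-root factor in `μ`. -/
noncomputable def sq5 : ℝ := Real.sqrt (2 / (1 - Real.cos (sigma * Real.pi)))

/-- Real form of `ψ₁₂` on the positive imaginary axis. -/
noncomputable def HH (κ : ℝ) : ℝ :=
  sigma * (sigma - 2) / 3 * sq5 / κ ^ sigma * (-κ ^ 2 / (2 - sigma) + 1 / sigma) + nu

lemma s5sq : Real.sqrt 5 ^ 2 = 5 := Real.sq_sqrt (by norm_num)

lemma s5lb : 2.2360679 < Real.sqrt 5 := by
  rw [show (2.2360679:ℝ) = Real.sqrt (2.2360679^2) by rw [Real.sqrt_sq]; norm_num]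
  exact Real.sqrt_lt_sqrt (by positivity) (by norm_num)

lemma s5ub : Real.sqrt 5 < 2.2360680 := by
  rw [show (2.2360680:ℝ) = Real.sqrt (2.2360680^2) by rw [Real.sqrt_sq]; norm_num]
  exact Real.sqrt_lt_sqrt (by norm_num) (by norm_num)

lemma sigma_pi : sigma * Real.pi = 2 * Real.arctan ((3 + Real.sqrt 5) / 2) := by
  rw [sigma]; field_simp

lemma one_add_t_sq : 1 + ((3 + Real.sqrt 5) / 2) ^ 2 = (9 + 3 * Real.sqrt 5) / 2 := by
  nlinarith [s5sq]

lemma cos_sigma_pi : Real.cos (sigma * Real.pi) = -(Real.sqrt 5 / 3) := by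
  rw [sigma_pi, Real.cos_two_mul, Real.cos_sq_arctan, one_add_t_sq]
  have h9 : (9 : ℝ) + 3 * Real.sqrt 5 > 0 := by positivity
  field_simp
  nlinarith [s5sq]

lemma sin_sigma_pi : Real.sin (sigma * Real.pi) = 2 / 3 := by
  rw [sigma_pi, Real.sin_two_mul, Real.sin_arctan, Real.cos_arctan]
  have hS : (0:ℝ) < 1 + ((3 + Real.sqrt 5)/2)^2 := by positivity
  have key : 2 * ((3 + Real.sqrt 5) / 2 / Real.sqrt (1 + ((3 + Real.sqrt 5)/2)^2)) *
      (1 / Real.sqrt (1 + ((3 + Real.sqrt 5)/2)^2))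
      = (3 + Real.sqrt 5) / (Real.sqrt (1 + ((3 + Real.sqrt 5)/2)^2) *
        Real.sqrt (1 + ((3 + Real.sqrt 5)/2)^2)) := by ring
  rw [key, Real.mul_self_sqrt hS.le, one_add_t_sq]
  rw [div_eq_iff (by positivity)]
  ring

lemma two_div_eq : 2 / (1 - Real.cos (sigma * Real.pi)) = (9 - 3 * Real.sqrt 5) / 2 := by
  rw [cos_sigma_pi]
  rw [div_eq_div_iff (by nlinarith [s5lb]) (by norm_num)]
  nlinarith [s5sq]

lemma sq5_eq : sq5 = Real.sqrt ((9 - 3 * Real.sqrt 5) / 2) := by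
  rw [sq5, two_div_eq]

lemma sq5_lb : 1.07046 < sq5 := by
  rw [sq5_eq]
  rw [show (1.07046:ℝ) = Real.sqrt (1.07046^2) by rw [Real.sqrt_sq]; norm_num]
  apply Real.sqrt_lt_sqrt (by positivity)
  nlinarith [s5ub]

lemma sq5_ub : sq5 < 1.07047 := by
  rw [sq5_eq]
  rw [show (1.07047:ℝ) = Real.sqrt (1.07047^2) by rw [Real.sqrt_sq]; norm_num]
  apply Real.sqrt_lt_sqrt (by nlinarith [s5ub])
  nlinarith [s5lb]

lemma nu_lb : -0.490712 < nu := by rw [nu]; nlinarith [s5ub]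
lemma nu_ub : nu < -0.49071 := by rw [nu]; nlinarith [s5lb]

/- ### Taylor bound for cosine -/

lemma cos_taylor (x : ℝ) (hx : |x| ≤ 1) :
    |Real.cos x - (1 - x^2/2 + x^4/24 - x^6/720 + x^8/40320)| ≤ |x|^10 * (11 / 36288000) := by
  have hb := Complex.exp_bound (x := (x:ℂ) * I) (by simpa using hx) (n := 10) (by norm_num)
  have hsum : (∑ m ∈ Finset.range 10, ((x:ℂ) * I) ^ m / m.factorial).re
      = 1 - x^2/2 + x^4/24 - x^6/720 + x^8/40320 := by
    simp [Finset.sum_range_succ, mul_pow, pow_succ, Nat.factorial, Complex.div_re]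
    ring
  have hre : (Complex.exp ((x:ℂ)*I) - ∑ m ∈ Finset.range 10, ((x:ℂ) * I) ^ m / m.factorial).re
      = Real.cos x - (1 - x^2/2 + x^4/24 - x^6/720 + x^8/40320) := by
    rw [Complex.sub_re, hsum, Complex.exp_mul_I]
    simp [Complex.cos_ofReal_re]
  calc |Real.cos x - (1 - x^2/2 + x^4/24 - x^6/720 + x^8/40320)|
      ≤ ‖Complex.exp ((x:ℂ)*I) - ∑ m ∈ Finset.range 10, ((x:ℂ) * I) ^ m / m.factorial‖ := by
        rw [← hre]; exact Complex.abs_re_le_norm _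
    _ ≤ ‖(x:ℂ)*I‖ ^ 10 * ((11:ℕ) * (((10:ℕ).factorial * 10 : ℝ))⁻¹) := by
        exact_mod_cast hb
    _ = |x|^10 * (11 / 36288000) := by
        simp [Nat.factorial]
        norm_num

lemma cos_of_rat_gt (x : ℝ) (hx0 : 0 ≤ x) (hx : x ≤ 1)
    (h : 2/3 + x^10 * (11/36288000) < 1 - x^2/2 + x^4/24 - x^6/720 + x^8/40320) :
    2/3 < Real.cos x := by
  have := cos_taylor x (by rwa [_root_.abs_of_nonneg hx0])
  rw [_root_.abs_of_nonneg hx0] at this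
  have := abs_le.1 this
  linarith [this.1]

lemma cos_of_rat_lt (x : ℝ) (hx0 : 0 ≤ x) (hx : x ≤ 1)
    (h : 1 - x^2/2 + x^4/24 - x^6/720 + x^8/40320 + x^10 * (11/36288000) < 2/3) :
    Real.cos x < 2/3 := by
  have := cos_taylor x (by rwa [_root_.abs_of_nonneg hx0])
  rw [_root_.abs_of_nonneg hx0] at this
  have := abs_le.1 this
  linarith [this.2]

/- ### Bounds on `σ` -/

lemma phi_mem : sigma * Real.pi - Real.pi/2 ∈ Set.Icc (0:ℝ) Real.pi := by
  have h1 : Real.pi/4 < Real.arctan ((3 + Real.sqrt 5) / 2) := by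
    rw [← Real.arctan_one]
    apply Real.arctan_strictMono
    nlinarith [Real.sqrt_nonneg 5]
  have h2 : Real.arctan ((3 + Real.sqrt 5) / 2) < Real.pi/2 := Real.arctan_lt_pi_div_two _
  rw [sigma_pi]
  constructor <;> [linarith; linarith [Real.pi_pos]]

lemma cos_phi : Real.cos (sigma * Real.pi - Real.pi/2) = 2/3 := by
  rw [show sigma * Real.pi - Real.pi/2 = -(Real.pi/2 - sigma * Real.pi) by ring,
    Real.cos_neg, Real.cos_pi_div_two_sub, sin_sigma_pi]

lemma phi_gt : (0.8410570 : ℝ) < sigma * Real.pi - Real.pi/2 := by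
  have hu : 2/3 < Real.cos 0.8410570 := by
    apply cos_of_rat_gt <;> norm_num
  rw [← cos_phi] at hu
  have hmem : (0.8410570:ℝ) ∈ Set.Icc (0:ℝ) Real.pi := by
    constructor
    · norm_num
    · nlinarith [Real.pi_gt_d6]
  exact (Real.strictAntiOn_cos.lt_iff_gt phi_mem hmem).1 hu

lemma phi_lt : sigma * Real.pi - Real.pi/2 < 0.8410694 := by
  have hv : Real.cos 0.8410694 < 2/3 := by
    apply cos_of_rat_lt <;> norm_num
  rw [← cos_phi] at hv
  have hmem : (0.8410694:ℝ) ∈ Set.Icc (0:ℝ) Real.pi := by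
    constructor
    · norm_num
    · nlinarith [Real.pi_gt_d6]
  exact (Real.strictAntiOn_cos.lt_iff_gt hmem phi_mem).1 hv

lemma sigma_lb : (195/254 : ℝ) < sigma := by
  have h := phi_gt
  have hπ : Real.pi < 3.141593 := Real.pi_lt_d6
  have hπ0 : 0 < Real.pi := Real.pi_pos
  nlinarith [h, hπ, hπ0]

lemma sigma_ub : sigma < (704/917 : ℝ) := by
  have h := phi_lt
  have hπ : 3.141592 < Real.pi := Real.pi_gt_d6
  have hπ0 : 0 < Real.pi := Real.pi_pos
  nlinarith [h, hπ, hπ0]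

lemma sigma_pos : 0 < sigma := lt_trans (by norm_num) sigma_lb
lemma sigma_lt_two : sigma < 2 := lt_trans sigma_ub (by norm_num)
lemma sigma_ne : sigma ≠ 0 := ne_of_gt sigma_pos
lemma two_sub_sigma_pos : 0 < 2 - sigma := by linarith [sigma_lt_two]

/- ### The reduction of `ψ₁₂` on the imaginary axis to a real function -/

lemma cpow_kI (κ : ℝ) (hκ : 0 < κ) :
    ((κ : ℂ) * I) ^ (sigma : ℂ)
      = ((κ ^ sigma : ℝ) : ℂ) * Complex.exp (((sigma * Real.pi / 2 : ℝ) : ℂ) * I) := by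
  have hz : (κ : ℂ) * I ≠ 0 := by simp [Complex.ext_iff, hκ.ne']
  rw [Complex.cpow_def_of_ne_zero hz]
  have harg : Complex.arg ((κ:ℂ) * I) = Real.pi / 2 := by
    rw [Complex.arg_real_mul _ hκ, Complex.arg_I]
  have habs : ‖(κ:ℂ) * I‖ = κ := by simp [abs_of_pos hκ]
  rw [Complex.log, habs, harg, Real.rpow_def_of_pos hκ]
  push_cast
  rw [← Complex.exp_add]
  ring_nf

lemma psi12_eq (κ : ℝ) (hκ : 0 < κ) : psi12 ((κ:ℂ) * I) = (HH κ : ℂ) := by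
  have hE : Complex.exp (((sigma * Real.pi / 2 : ℝ) : ℂ) * I) ≠ 0 := Complex.exp_ne_zero _
  rw [psi12, mu, cpow_kI κ hκ, mul_div_mul_right _ _ hE]
  have hI : ((κ:ℂ) * I) ^ 2 = -((κ:ℝ)^2 : ℂ) := by
    push_cast; rw [mul_pow, Complex.I_sq]; ring
  rw [hI, HH, sq5]
  push_cast
  ring

/- ### Rational-exponent bounds for rpow -/

lemma rpow_rat_lb {x L : ℝ} (hx : 0 < x) (hL : 0 ≤ L) (p q : ℕ) (hq : (q:ℝ) ≠ 0)
    (h : L^q ≤ x^p) : L ≤ x^((p:ℝ)/q) := by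
  have key : (x^((p:ℝ)/q))^q = x^p := by
    rw [← Real.rpow_natCast (x^((p:ℝ)/q)) q, ← Real.rpow_mul hx.le,
      div_mul_cancel₀ _ hq, Real.rpow_natCast]
  apply le_of_pow_le_pow_left₀ (by exact_mod_cast hq) (Real.rpow_nonneg hx.le _)
  rw [key]; exact h

lemma rpow_rat_ub {x U : ℝ} (hx : 0 < x) (hU : 0 ≤ U) (p q : ℕ) (hq : (q:ℝ) ≠ 0)
    (h : x^p ≤ U^q) : x^((p:ℝ)/q) ≤ U := by
  have key : (x^((p:ℝ)/q))^q = x^p := by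
    rw [← Real.rpow_natCast (x^((p:ℝ)/q)) q, ← Real.rpow_mul hx.le,
      div_mul_cancel₀ _ hq, Real.rpow_natCast]
  apply le_of_pow_le_pow_left₀ (by exact_mod_cast hq) hU
  rw [key]; exact h

lemma pow_a_lb : (1.8408935 : ℝ) ≤ (2.2142:ℝ) ^ sigma := by
  have h1 : (1.8408935 : ℝ) ≤ (2.2142:ℝ) ^ ((195:ℝ)/254) := by
    apply rpow_rat_lb (by norm_num) (by norm_num) 195 254 (by norm_num)
    norm_num
  refine h1.trans ?_
  exact Real.rpow_le_rpow_of_exponent_le (by norm_num) (le_of_lt sigma_lb)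

lemma pow_b_ub : (2.2143:ℝ) ^ sigma ≤ 1.8409637 := by
  have h1 : (2.2143:ℝ) ^ ((704:ℝ)/917) ≤ 1.8409637 := by
    apply rpow_rat_ub (by norm_num) (by norm_num) 704 917 (by norm_num)
    rw [show (704:ℕ) = 176 * 4 by norm_num, show (917:ℕ) = 131 * 7 by norm_num, pow_mul, pow_mul]
    norm_num
  refine le_trans ?_ h1
  exact Real.rpow_le_rpow_of_exponent_le (by norm_num) (le_of_lt sigma_ub)

/- ### Sign of `HH` at the endpoints -/

lemma HH_eq (κ : ℝ) (hκ : 0 < κ) :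
    HH κ = (sq5/3*(sigma*(1+κ^2)-2) + nu * κ^sigma) / κ^sigma := by
  have h1 : κ^sigma ≠ 0 := ne_of_gt (Real.rpow_pos_of_pos hκ _)
  have hs := sigma_ne
  have h2 : 2 - sigma ≠ 0 := ne_of_gt two_sub_sigma_pos
  rw [HH]
  field_simp
  ring

lemma HH_a_neg : HH 2.2142 < 0 := by
  rw [HH_eq _ (by norm_num)]
  apply div_neg_of_neg_of_pos _ (Real.rpow_pos_of_pos (by norm_num) _)
  have h1 := sigma_ub
  have h2 := sigma_lb
  have h3 := sq5_ub
  have h4 := sq5_lb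
  have h5 := nu_ub
  have h6 := nu_lb
  have h7 := pow_a_lb
  have h8 : nu * (2.2142:ℝ)^sigma ≤ nu * 1.8408935 := by
    apply mul_le_mul_of_nonpos_left h7 (by nlinarith)
  nlinarith [h8]

lemma HH_b_pos : 0 < HH 2.2143 := by
  rw [HH_eq _ (by norm_num)]
  apply div_pos _ (Real.rpow_pos_of_pos (by norm_num) _)
  have h1 := sigma_ub
  have h2 := sigma_lb
  have h3 := sq5_ub
  have h4 := sq5_lb
  have h5 := nu_ub
  have h6 := nu_lb
  have h7 := pow_b_ub
  have h8 : nu * 1.8409637 ≤ nu * (2.2143:ℝ)^sigma := by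
    apply mul_le_mul_of_nonpos_left h7 (by nlinarith)
  nlinarith [h8]

/- ### Strict monotonicity of `HH` on positive reals -/

lemma HH_rep (κ : ℝ) (hκ : 0 < κ) :
    HH κ = (-(sigma*(sigma-2)/3*sq5)/(2-sigma)) * κ^(2-sigma)
      + (sigma*(sigma-2)/3*sq5/sigma) * (κ^sigma)⁻¹ + nu := by
  have h1 : κ^sigma ≠ 0 := ne_of_gt (Real.rpow_pos_of_pos hκ _)
  have hs := sigma_ne
  have h2 : 2 - sigma ≠ 0 := ne_of_gt two_sub_sigma_pos
  have hsub : κ^(2-sigma) = κ^2 / κ^sigma := by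
    rw [Real.rpow_sub hκ]
    norm_num [Real.rpow_natCast]
  rw [HH, hsub]
  field_simp

lemma HH_strictMono : StrictMonoOn HH (Set.Ioi (0:ℝ)) := by
  intro x hx y hy hxy
  simp only [Set.mem_Ioi] at hx hy
  rw [HH_rep x hx, HH_rep y hy]
  have hsq5 : (0:ℝ) < sq5 := lt_trans (by norm_num) sq5_lb
  have hM : sigma*(sigma-2)/3*sq5 < 0 := by
    nlinarith [mul_pos (mul_pos sigma_pos two_sub_sigma_pos) hsq5]
  have hA : 0 < -(sigma*(sigma-2)/3*sq5)/(2-sigma) :=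
    div_pos (neg_pos.2 hM) two_sub_sigma_pos
  have hB : sigma*(sigma-2)/3*sq5/sigma < 0 :=
    div_neg_of_neg_of_pos hM sigma_pos
  have hterm1 : (-(sigma*(sigma-2)/3*sq5)/(2-sigma)) * x^(2-sigma)
      < (-(sigma*(sigma-2)/3*sq5)/(2-sigma)) * y^(2-sigma) := by
    apply mul_lt_mul_of_pos_left _ hA
    exact Real.rpow_lt_rpow hx.le hxy two_sub_sigma_pos
  have hterm2 : (sigma*(sigma-2)/3*sq5/sigma) * (x^sigma)⁻¹
      < (sigma*(sigma-2)/3*sq5/sigma) * (y^sigma)⁻¹ := by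
    apply mul_lt_mul_of_neg_left _ hB
    apply inv_strictAnti₀ (Real.rpow_pos_of_pos hx _)
    exact Real.rpow_lt_rpow hx.le hxy sigma_pos
  linarith

/- ### Continuity -/

lemma HH_continuousOn : ContinuousOn HH (Set.Icc (2.2142:ℝ) 2.2143) := by
  have hne : ∀ x ∈ Set.Icc (2.2142:ℝ) 2.2143, x ≠ 0 ∨ 0 ≤ sigma := fun x hx =>
    Or.inr sigma_pos.le
  have hpow : ContinuousOn (fun x : ℝ => x ^ sigma) (Set.Icc (2.2142:ℝ) 2.2143) :=
    continuousOn_id.rpow_const hne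
  have hpow_ne : ∀ x ∈ Set.Icc (2.2142:ℝ) 2.2143, x ^ sigma ≠ 0 := by
    intro x hx
    exact ne_of_gt (Real.rpow_pos_of_pos (lt_of_lt_of_le (by norm_num) hx.1) _)
  unfold HH
  apply ContinuousOn.add _ continuousOn_const
  apply ContinuousOn.mul
  · exact (continuousOn_const.div hpow hpow_ne)
  · apply ContinuousOn.add _ continuousOn_const
    apply ContinuousOn.div_const
    apply ContinuousOn.neg
    exact (continuousOn_id.pow 2)

/- ### Existence and uniqueness of the root -/

lemma HH_exists_root : ∃ κ : ℝ, 2.2142 < κ ∧ κ < 2.2143 ∧ HH κ = 0 := by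
  have h0 : (0:ℝ) ∈ Set.Ioo (HH 2.2142) (HH 2.2143) := ⟨HH_a_neg, HH_b_pos⟩
  have := intermediate_value_Ioo (by norm_num : (2.2142:ℝ) ≤ 2.2143) HH_continuousOn h0
  obtain ⟨κ, hκ, hκ0⟩ := this
  exact ⟨κ, hκ.1, hκ.2, hκ0⟩

lemma root_bounds {κ : ℝ} (hκ : 0 < κ) (h : HH κ = 0) : 2.2142 < κ ∧ κ < 2.2143 := by
  constructor
  · by_contra hle
    push_neg at hle
    rcases eq_or_lt_of_le hle with heq | hlt
    · rw [heq] at h; linarith [HH_a_neg]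
    · have := HH_strictMono (Set.mem_Ioi.2 hκ) (Set.mem_Ioi.2 (by norm_num : (0:ℝ) < 2.2142)) hlt
      rw [h] at this
      linarith [HH_a_neg]
  · by_contra hle
    push_neg at hle
    rcases eq_or_lt_of_le hle with heq | hlt
    · rw [← heq] at h; linarith [HH_b_pos]
    · have := HH_strictMono (Set.mem_Ioi.2 (by norm_num : (0:ℝ) < 2.2143)) (Set.mem_Ioi.2 hκ) hlt
      rw [h] at this
      linarith [HH_b_pos]

lemma mu_ne_zero : mu ≠ 0 := by
  have h1 : (sigma * (sigma-2) / 3 : ℝ) < 0 := by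
    nlinarith [sigma_pos, sigma_lt_two]
  have h2 : (0:ℝ) < Real.sqrt (2 / (1 - Real.cos (sigma * Real.pi))) := by
    rw [show Real.sqrt (2 / (1 - Real.cos (sigma * Real.pi))) = sq5 from rfl, sq5_eq]
    apply Real.sqrt_pos.2
    nlinarith [s5ub]
  exact mul_ne_zero (mul_ne_zero (Complex.ofReal_ne_zero.2 h1.ne)
    (Complex.ofReal_ne_zero.2 h2.ne')) (Complex.exp_ne_zero _)

theorem stmt2 :
    (∃! κ : ℝ, 0 < κ ∧ psi12 (κ * I) = 0) ∧
    (∀ κ : ℝ, 0 < κ → psi12 (κ * I) = 0 →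
      (((κ : ℂ) * I) ^ 2 + ((nu : ℂ) * (2 - (sigma : ℂ)) / mu) * ((κ : ℂ) * I) ^ (sigma : ℂ)
          + (2 - (sigma : ℂ)) / (sigma : ℂ) = 0 ∧
        2.2142 < κ ∧ κ < 2.2143)) := by
  constructor
  · obtain ⟨κ, h1, h2, h3⟩ := HH_exists_root
    have hκ0 : (0:ℝ) < κ := by linarith
    refine ⟨κ, ⟨hκ0, by rw [psi12_eq κ hκ0, h3]; simp⟩, ?_⟩
    rintro y ⟨hy0, hy⟩
    have hy' : HH y = 0 := by
      have h := psi12_eq y hy0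
      rw [hy] at h
      exact_mod_cast h.symm
    by_contra hne
    rcases lt_or_gt_of_ne hne with hlt | hlt
    · have := HH_strictMono (Set.mem_Ioi.2 hy0) (Set.mem_Ioi.2 hκ0) hlt
      rw [hy', h3] at this
      exact lt_irrefl _ this
    · have := HH_strictMono (Set.mem_Ioi.2 hκ0) (Set.mem_Ioi.2 hy0) hlt
      rw [hy', h3] at this
      exact lt_irrefl _ this
  · intro κ hκ hpsi
    have hH : HH κ = 0 := by
      have h := psi12_eq κ hκ
      rw [hpsi] at h
      exact_mod_cast h.symm
    refine ⟨?_, root_bounds hκ hH⟩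
    have hz : (κ:ℂ) * I ≠ 0 := by simp [Complex.ext_iff, hκ.ne']
    have hzp : ((κ:ℂ) * I) ^ (sigma:ℂ) ≠ 0 := by
      rw [Complex.cpow_def_of_ne_zero hz]
      exact Complex.exp_ne_zero _
    have hs : (sigma:ℂ) ≠ 0 := Complex.ofReal_ne_zero.2 sigma_ne
    have h2s : (2 - (sigma:ℂ)) ≠ 0 := by
      rw [show (2 - (sigma:ℂ)) = ((2 - sigma : ℝ) : ℂ) by push_cast; ring]
      exact Complex.ofReal_ne_zero.2 (ne_of_gt two_sub_sigma_pos)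
    have hmu := mu_ne_zero
    rw [psi12] at hpsi
    field_simp at hpsi ⊢
    linear_combination hpsi
end

section
/- Let U ⊆ ℂ be open, let f : U → ℂ be holomorphic, and let z₁ ≠ z₂ be points with the closed segment [z₁, z₂] ⊆ U. Let θ, θ′ ∈ ℝ with θ′ ≤ θ + π, and suppose that for every z ∈ [z₁, z₂] the derivative f′(z) lies in the open sector S(θ, θ′) = {ρ·e^{iφ} : ρ > 0, θ < φ < θ′}. Then (f(z₂) − f(z₁))/(z₂ − z₁) ∈ S(θ, θ′). -/
open Complex

/-- The open sector of directions strictly between angles `θ` and `θ'`. -/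
def sector (θ θ' : ℝ) : Set ℂ :=
  {z | ∃ ρ φ : ℝ, 0 < ρ ∧ θ < φ ∧ φ < θ' ∧ z = (ρ : ℂ) * Complex.exp ((φ : ℂ) * I)}

lemma im_aux (ρ φ ψ : ℝ) :
    (Complex.exp (-(ψ:ℂ)*I) * ((ρ:ℂ) * Complex.exp ((φ:ℂ)*I))).im = ρ * Real.sin (φ - ψ) := by
  rw [mul_comm (Complex.exp _), mul_assoc, ← Complex.exp_add,
    show (φ:ℂ)*I + -(ψ:ℂ)*I = ((φ-ψ:ℝ):ℂ)*I by push_cast; ring]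
  rw [show ((↑ρ:ℂ) * cexp (↑(φ - ψ) * I)).im = ρ * (cexp (↑(φ - ψ) * I)).im by simp [Complex.mul_im],
    Complex.exp_ofReal_mul_I_im]

lemma sector_mem_iff {θ θ' : ℝ} (hlt : θ < θ') (hθ : θ' ≤ θ + Real.pi) (z : ℂ) :
    z ∈ sector θ θ' ↔
      0 < (Complex.exp (-(θ:ℂ)*I) * z).im ∧ (Complex.exp (-(θ':ℂ)*I) * z).im < 0 := by
  constructor
  · rintro ⟨ρ, φ, hρ, h1, h2, rfl⟩
    rw [im_aux, im_aux]
    constructor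
    · exact mul_pos hρ (Real.sin_pos_of_pos_of_lt_pi (by linarith) (by linarith))
    · exact mul_neg_of_pos_of_neg hρ
        (Real.sin_neg_of_neg_of_neg_pi_lt (by linarith) (by linarith))
  · rintro ⟨h1, h2⟩
    set w := Complex.exp (-(θ:ℂ)*I) * z with hw
    have hwne : w ≠ 0 := fun h => by simp [h] at h1
    have hzw : z = Complex.exp ((θ:ℂ)*I) * w := by
      rw [hw, ← mul_assoc, ← Complex.exp_add]; ring_nf; simp
    have habs : ((‖w‖ : ℝ) : ℂ) * Complex.exp (↑w.arg * I) = w :=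
      Complex.norm_mul_exp_arg_mul_I w
    set r := ‖w‖ with hr
    set a := w.arg with ha
    have hzeq : z = (r : ℂ) * Complex.exp ((↑(θ + a) : ℂ) * I) := by
      rw [hzw, ← habs,
        show ((↑(θ + a) : ℂ) * I) = (θ:ℂ)*I + (↑a)*I by push_cast; ring,
        Complex.exp_add]
      ring
    have harg_pos : 0 < a := by
      rcases lt_or_eq_of_le (Complex.arg_nonneg_iff.2 h1.le) with h | h
      · exact h
      · exfalso
        have := Complex.norm_mul_sin_arg w
        rw [← h, Real.sin_zero, mul_zero] at this
        exact h1.ne' this.symm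
    have harg_lt : a < Real.pi :=
      lt_of_le_of_ne (Complex.arg_le_pi w) (fun h => by
        have := Complex.norm_mul_sin_arg w
        rw [← ha, h, Real.sin_pi, mul_zero] at this
        exact h1.ne' this.symm)
    refine ⟨r, θ + a, norm_pos_iff.2 hwne, by linarith, ?_, hzeq⟩
    by_contra h
    push_neg at h
    have him : (Complex.exp (-(θ':ℂ)*I) * z).im = r * Real.sin (θ + a - θ') := by
      rw [hzeq, im_aux]
    rw [him] at h2
    have : 0 ≤ Real.sin (θ + a - θ') :=
      Real.sin_nonneg_of_nonneg_of_le_pi (by linarith) (by linarith)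
    nlinarith [norm_pos_iff.2 hwne]

theorem stmt9 (U : Set ℂ) (hU : IsOpen U) (f : ℂ → ℂ)
    (hf : DifferentiableOn ℂ f U)
    (z₁ z₂ : ℂ) (hne : z₁ ≠ z₂) (hseg : segment ℝ z₁ z₂ ⊆ U)
    (θ θ' : ℝ) (hθ : θ' ≤ θ + Real.pi)
    (hd : ∀ z ∈ segment ℝ z₁ z₂, deriv f z ∈ sector θ θ') :
    (f z₂ - f z₁) / (z₂ - z₁) ∈ sector θ θ' := by
  have hθθ' : θ < θ' := by
    obtain ⟨ρ, φ, _, h1, h2, _⟩ := hd z₁ (left_mem_segment ℝ z₁ z₂)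
    linarith
  set c := z₂ - z₁ with hc
  have hcne : c ≠ 0 := sub_ne_zero.2 hne.symm
  set γ : ℝ → ℂ := fun t => z₁ + (t:ℂ) * c with hγ
  have hmem : ∀ t ∈ Set.Icc (0:ℝ) 1, γ t ∈ segment ℝ z₁ z₂ := by
    intro t ht
    rw [segment_eq_image']
    exact ⟨t, ht, by simp [hγ, hc, Complex.real_smul]⟩
  have hγd : ∀ t : ℝ, HasDerivAt γ c t := by
    intro t
    simpa [hγ] using ((Complex.ofRealCLM.hasDerivAt (x := t)).mul_const c).const_add z₁
  have hder : ∀ t ∈ Set.uIcc (0:ℝ) 1, HasDerivAt (f ∘ γ) (deriv f (γ t) * c) t := by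
    intro t ht
    rw [Set.uIcc_of_le zero_le_one] at ht
    have hfd : DifferentiableAt ℂ f (γ t) :=
      hf.differentiableAt (hU.mem_nhds (hseg (hmem t ht)))
    exact hfd.hasDerivAt.comp t (hγd t)
  have hcont : ContinuousOn (fun t => deriv f (γ t)) (Set.Icc (0:ℝ) 1) := by
    apply ((hf.analyticOnNhd hU).deriv.continuousOn).comp
    · exact (continuous_const.add ((Complex.continuous_ofReal).mul continuous_const)).continuousOn
    · intro t ht; exact hseg (hmem t ht)
  have hint : IntervalIntegrable (fun t => deriv f (γ t)) MeasureTheory.volume 0 1 :=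
    (hcont.mono (by rw [Set.uIcc_of_le zero_le_one])).intervalIntegrable
  have key : (∫ t in (0:ℝ)..1, deriv f (γ t)) * c = f z₂ - f z₁ := by
    have := intervalIntegral.integral_eq_sub_of_hasDerivAt hder (hint.mul_const c)
    rw [← intervalIntegral.integral_mul_const, this]
    simp [hγ, hc, Function.comp]
  set Q := ∫ t in (0:ℝ)..1, deriv f (γ t) with hQ
  have hQeq : (f z₂ - f z₁) / (z₂ - z₁) = Q := by
    rw [← key, ← hc, mul_div_assoc, div_self hcne, mul_one]
  rw [hQeq]
  -- im of rotated integral equals integral of im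
  have him_int : ∀ ψ : ℝ, (Complex.exp (-(ψ:ℂ)*I) * Q).im
      = ∫ t in (0:ℝ)..1, (Complex.exp (-(ψ:ℂ)*I) * deriv f (γ t)).im := by
    intro ψ
    rw [hQ, ← intervalIntegral.integral_const_mul]
    exact (Complex.imCLM.intervalIntegral_comp_comm (hint.const_mul _)).symm
  have hptwise : ∀ t ∈ Set.Icc (0:ℝ) 1,
      0 < (Complex.exp (-(θ:ℂ)*I) * deriv f (γ t)).im ∧
      (Complex.exp (-(θ':ℂ)*I) * deriv f (γ t)).im < 0 := fun t ht =>
    (sector_mem_iff hθθ' hθ _).1 (hd _ (hmem t ht))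
  have hcont1 : ∀ ψ : ℝ, IntervalIntegrable
      (fun t => (Complex.exp (-(ψ:ℂ)*I) * deriv f (γ t)).im) MeasureTheory.volume 0 1 := by
    intro ψ
    exact ((Complex.continuous_im.comp_continuousOn
      ((continuousOn_const.mul hcont))).mono
        (by rw [Set.uIcc_of_le zero_le_one])).intervalIntegrable
  refine (sector_mem_iff hθθ' hθ Q).2 ⟨?_, ?_⟩
  · rw [him_int]
    apply intervalIntegral.intervalIntegral_pos_of_pos_on (hcont1 θ)
      (fun t ht => (hptwise t (Set.mem_Icc_of_Ioo ht)).1) zero_lt_one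
  · rw [him_int]
    have : (0:ℝ) < ∫ t in (0:ℝ)..1, -(Complex.exp (-(θ':ℂ)*I) * deriv f (γ t)).im :=
      intervalIntegral.intervalIntegral_pos_of_pos_on ((hcont1 θ').neg)
        (fun t ht => neg_pos.2 (hptwise t (Set.mem_Icc_of_Ioo ht)).2) zero_lt_one
    rw [intervalIntegral.integral_neg] at this
    linarith
end
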